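/- For every integer q ≥ 3 and every 2-element vertex set S, the anti-edge gadget AntiEdge_q(S) has maximum rooted density at S and maximum rooted 2-density at S both equal to (q+1)/2. -/

import Mathlib

set_option linter.unusedSectionVars false


variable {V : Type} [Fintype V]

/-- The maximum rooted density `m(H,R)`. -/
noncomputable def rootedDensity (H : SimpleGraph V) (R : Set V) : ℝ :=
  sSup {x : ℝ | ∃ H' : H.Subgraph, (H'.verts \ R).Nonempty ∧
    x = (H'.edgeSet.ncard : ℝ) / ((H'.verts \ R).ncard : ℝ)}

/-- The maximum 2-density `m₂(H)`. -/
noncomputable def density2 (H : SimpleGraph V) : ℝ :=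
  sSup {x : ℝ | ∃ H' : H.Subgraph, 3 ≤ H'.verts.ncard ∧
    x = ((H'.edgeSet.ncard : ℝ) - 1) / ((H'.verts.ncard : ℝ) - 2)}

/-- The maximum rooted 2-density `m₂(H,R) := max { m(H,R), m₂(H) }`. -/
noncomputable def rootedDensity2 (H : SimpleGraph V) (R : Set V) : ℝ :=
  max (rootedDensity H R) (density2 H)

/-- The anti-edge gadget `AntiEdge_q(S)`: the complete graph on `q` vertices
minus the edge joining the two root vertices (here the roots are the vertices
of `Fin q` with values `0` and `1`). -/
def antiEdge (q : ℕ) : SimpleGraph (Fin q) where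
  Adj u v := u ≠ v ∧ ¬((u.val = 0 ∧ v.val = 1) ∨ (u.val = 1 ∧ v.val = 0))
  symm := by
    constructor
    intro u v h
    exact ⟨h.1.symm, by tauto⟩
  loopless := by
    constructor
    intro u h
    exact h.1 rfl

section Helpers

variable {W : Type} [Fintype W]

lemma card_edgeSet_top_eq (W : Type) [Fintype W] :
    (⊤ : SimpleGraph W).edgeSet.ncard = (Fintype.card W).choose 2 := by
  classical
  rw [Set.ncard_eq_toFinset_card', ← SimpleGraph.card_edgeFinset_top_eq_card_choose_two]
  exact congrArg Finset.card (Finset.ext fun e => by simp)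

lemma card_edgeSet_le (G : SimpleGraph W) : G.edgeSet.ncard ≤ (Fintype.card W).choose 2 := by
  classical
  rw [← card_edgeSet_top_eq W]
  exact Set.ncard_le_ncard (SimpleGraph.edgeSet_mono le_top) (Set.toFinite _)

lemma card_edgeSet_add_one_le (G : SimpleGraph W) {a b : W} (hab : a ≠ b)
    (hnadj : ¬G.Adj a b) : G.edgeSet.ncard + 1 ≤ (Fintype.card W).choose 2 := by
  classical
  have hsub : G.edgeSet ⊆ (⊤ : SimpleGraph W).edgeSet \ {s(a,b)} := by
    intro e he
    refine ⟨SimpleGraph.edgeSet_mono le_top he, ?_⟩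
    intro h
    rw [Set.mem_singleton_iff] at h
    subst h
    exact hnadj he
  have hmem : s(a,b) ∈ (⊤ : SimpleGraph W).edgeSet := by simpa using hab
  have h1 : G.edgeSet.ncard ≤ ((⊤ : SimpleGraph W).edgeSet \ {s(a,b)}).ncard :=
    Set.ncard_le_ncard hsub (Set.toFinite _)
  rw [Set.ncard_diff_singleton_of_mem hmem] at h1
  have h2 : 0 < (⊤ : SimpleGraph W).edgeSet.ncard :=
    (Set.ncard_pos (Set.toFinite _)).2 ⟨_, hmem⟩
  rw [← card_edgeSet_top_eq W]
  omega

lemma subgraph_edge_card {G : SimpleGraph W} (H' : G.Subgraph) :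
    H'.edgeSet.ncard = H'.coe.edgeSet.ncard := by
  rw [← SimpleGraph.Subgraph.image_coe_edgeSet_coe,
    Set.ncard_image_of_injective _ (Sym2.map.injective Subtype.val_injective)]

lemma fintype_card_verts {G : SimpleGraph W} (H' : G.Subgraph) [Fintype H'.verts] :
    Fintype.card H'.verts = H'.verts.ncard := by
  rw [Set.ncard_eq_toFinset_card', Set.toFinset_card]

lemma two_mul_choose_two (n : ℕ) : 2 * n.choose 2 = n * (n - 1) := by
  cases n with
  | zero => simp
  | succ m =>
    rw [Nat.choose_two_right, Nat.succ_sub_one, Nat.mul_div_cancel']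
    have : Even (m * (m + 1)) := Nat.even_mul_succ_self m
    rw [mul_comm] at this
    exact this.two_dvd

lemma antiEdge_not_adj (q : ℕ) (hq : 2 < q) :
    ¬ (antiEdge q).Adj ⟨0, by omega⟩ ⟨1, by omega⟩ := by
  simp [antiEdge]

lemma antiEdge_edgeSet (q : ℕ) (hq : 2 < q) :
    (antiEdge q).edgeSet = (⊤ : SimpleGraph (Fin q)).edgeSet \
      {s(⟨0, by omega⟩, ⟨1, by omega⟩)} := by
  ext e
  refine Sym2.ind (fun u v => ?_) e
  simp only [SimpleGraph.mem_edgeSet, Set.mem_diff, Set.mem_singleton_iff,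
    SimpleGraph.top_adj, Sym2.eq_iff]
  have h : (antiEdge q).Adj u v ↔
      u ≠ v ∧ ¬((u.val = 0 ∧ v.val = 1) ∨ (u.val = 1 ∧ v.val = 0)) := Iff.rfl
  rw [h]
  simp only [Ne, Fin.ext_iff, Fin.val_mk]

lemma antiEdge_edge_card (q : ℕ) (hq : 2 < q) :
    (antiEdge q).edgeSet.ncard = q.choose 2 - 1 := by
  have h01 : (⟨0, by omega⟩ : Fin q) ≠ ⟨1, by omega⟩ := by
    simp [Fin.ext_iff]
  have hmem : s((⟨0, by omega⟩ : Fin q), ⟨1, by omega⟩) ∈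
      (⊤ : SimpleGraph (Fin q)).edgeSet := by simpa using h01
  rw [antiEdge_edgeSet q hq, Set.ncard_diff_singleton_of_mem hmem,
    card_edgeSet_top_eq, Fintype.card_fin]

lemma antiEdge_key (q : ℕ) (hq : 2 < q) (H' : (antiEdge q).Subgraph) :
    2 * H'.edgeSet.ncard ≤
      (H'.verts \ ({⟨0, by omega⟩, ⟨1, by omega⟩} : Set (Fin q))).ncard * (q + 1) := by
  classical
  set x0 : Fin q := ⟨0, by omega⟩ with hx0
  set x1 : Fin q := ⟨1, by omega⟩ with hx1
  have h01 : x0 ≠ x1 := by simp [hx0, hx1, Fin.ext_iff]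
  set R : Set (Fin q) := {x0, x1} with hR
  set A := H'.verts with hA
  set k := (A \ R).ncard with hk
  set n := A.ncard with hn
  haveI : Fintype ↥A := (Set.toFinite A).fintype
  have hcardA : Fintype.card ↥A = n := fintype_card_verts H'
  have hE : H'.edgeSet.ncard = H'.coe.edgeSet.ncard := subgraph_edge_card H'
  have hnq : n ≤ q := by
    have := Set.ncard_le_ncard (Set.subset_univ A) (Set.toFinite _)
    simpa [Set.ncard_univ] using this
  have hsplit : (A ∩ R).ncard + k = n := Set.ncard_inter_add_ncard_diff_eq_ncard A R (Set.toFinite _)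
  by_cases hRA : R ⊆ A
  · have hAR : A ∩ R = R := Set.inter_eq_right.2 hRA
    have hR2 : R.ncard = 2 := Set.ncard_pair h01
    have hnk : n = k + 2 := by rw [← hsplit, hAR, hR2]; omega
    have h0A : x0 ∈ A := hRA (by simp [hR])
    have h1A : x1 ∈ A := hRA (by simp [hR])
    have hnadj : ¬ H'.coe.Adj ⟨x0, h0A⟩ ⟨x1, h1A⟩ := by
      intro h
      exact antiEdge_not_adj q hq (H'.adj_sub h)
    have hne : (⟨x0, h0A⟩ : ↥A) ≠ ⟨x1, h1A⟩ :=
      fun h => h01 (congrArg Subtype.val h)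
    have hb := card_edgeSet_add_one_le H'.coe hne hnadj
    rw [hcardA, hnk] at hb
    have hc : 2 * (k + 2).choose 2 = (k + 2) * (k + 1) := by
      simpa using two_mul_choose_two (k + 2)
    have : 2 * H'.edgeSet.ncard + 2 ≤ (k + 2) * (k + 1) := by
      rw [hE]
      omega
    have hkq : k + 2 ≤ q := by omega
    nlinarith
  · obtain ⟨r, hrR, hrA⟩ := Set.not_subset.1 hRA
    have hsub : A ∩ R ⊆ R \ {r} := fun y hy =>
      ⟨hy.2, fun h => hrA (Set.mem_singleton_iff.1 h ▸ hy.1)⟩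
    have hR2 : R.ncard = 2 := Set.ncard_pair h01
    have h1 : (A ∩ R).ncard ≤ 1 := by
      have := Set.ncard_le_ncard hsub (Set.toFinite _)
      rwa [Set.ncard_diff_singleton_of_mem hrR, hR2] at this
    have hnk : n ≤ k + 1 := by omega
    have hb := card_edgeSet_le H'.coe
    rw [hcardA] at hb
    have hc := two_mul_choose_two n
    have hmono : n * (n - 1) ≤ (k + 1) * k :=
      Nat.mul_le_mul hnk (by omega)
    have hkq : k ≤ q := by omega
    have : 2 * H'.edgeSet.ncard ≤ (k + 1) * k := by rw [hE]; omega
    nlinarith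

lemma antiEdge_key2 (q : ℕ) (hq : 3 ≤ q) (H' : (antiEdge q).Subgraph)
    (h3 : 3 ≤ H'.verts.ncard) :
    2 * H'.edgeSet.ncard ≤ (H'.verts.ncard - 2) * (q + 1) + 2 := by
  classical
  set A := H'.verts with hA
  set n := A.ncard with hn
  haveI : Fintype ↥A := (Set.toFinite A).fintype
  have hcardA : Fintype.card ↥A = n := fintype_card_verts H'
  have hE : H'.edgeSet.ncard = H'.coe.edgeSet.ncard := subgraph_edge_card H'
  have hnq : n ≤ q := by
    have := Set.ncard_le_ncard (Set.subset_univ A) (Set.toFinite _)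
    simpa [Set.ncard_univ] using this
  have hb := card_edgeSet_le H'.coe
  rw [hcardA] at hb
  obtain ⟨m, hm⟩ : ∃ m, n = m + 2 := ⟨n - 2, by omega⟩
  rw [hm] at hb ⊢
  have hc : 2 * (m + 2).choose 2 = (m + 2) * (m + 1) := by
    simpa using two_mul_choose_two (m + 2)
  have hmq : m + 3 ≤ q + 1 := by omega
  have : 2 * H'.edgeSet.ncard ≤ (m + 2) * (m + 1) := by rw [hE]; omega
  have h2 : (m + 2) * (m + 1) = m * (m + 3) + 2 := by ring
  have h3' : m * (m + 3) ≤ m * (q + 1) := Nat.mul_le_mul_left m (by omega)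
  simp only [Nat.add_sub_cancel]
  omega

end Helpers

/-- For every integer `q ≥ 3`, the anti-edge gadget has maximum rooted density
and maximum rooted 2-density at its root pair `S` both equal to `(q+1)/2`. -/
theorem antiEdge_density (q : ℕ) (hq : 3 ≤ q) :
    rootedDensity (antiEdge q) ({⟨0, by omega⟩, ⟨1, by omega⟩} : Set (Fin q))
        = ((q : ℝ) + 1) / 2 ∧
    rootedDensity2 (antiEdge q) ({⟨0, by omega⟩, ⟨1, by omega⟩} : Set (Fin q))
        = ((q : ℝ) + 1) / 2 := by
  classical
  have h01 : (⟨0, by omega⟩ : Fin q) ≠ ⟨1, by omega⟩ := by simp [Fin.ext_iff]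
  set R : Set (Fin q) := {⟨0, by omega⟩, ⟨1, by omega⟩} with hR
  have hc2 : 2 * q.choose 2 = q * (q - 1) := two_mul_choose_two q
  have hc1 : 0 < q.choose 2 := Nat.choose_pos (by omega)
  have hcR : 2 * ((q.choose 2 : ℕ) : ℝ) = (q : ℝ) * ((q : ℝ) - 1) := by
    have h := congrArg (Nat.cast (R := ℝ)) hc2
    push_cast [Nat.cast_sub (show 1 ≤ q by omega)] at h
    linarith
  -- facts about the top subgraph
  have hvtop : ((⊤ : (antiEdge q).Subgraph).verts \ R) = Set.univ \ R := by
    rw [SimpleGraph.Subgraph.verts_top]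
  have hksub : ((Set.univ : Set (Fin q)) \ R).ncard = q - 2 := by
    rw [Set.ncard_diff (Set.subset_univ R) (Set.toFinite _), Set.ncard_univ,
      Nat.card_eq_fintype_card, Fintype.card_fin, Set.ncard_pair h01]
  have hne0 : ((Set.univ : Set (Fin q)) \ R).Nonempty :=
    ⟨⟨2, by omega⟩, Set.mem_univ _, by simp [hR, Fin.ext_iff]⟩
  have hEtop : (⊤ : (antiEdge q).Subgraph).edgeSet.ncard = q.choose 2 - 1 := by
    rw [SimpleGraph.Subgraph.edgeSet_top]
    exact antiEdge_edge_card q hq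
  have hval : ((q.choose 2 - 1 : ℕ) : ℝ) / ((q - 2 : ℕ) : ℝ) = ((q : ℝ) + 1) / 2 := by
    rw [Nat.cast_sub hc1, Nat.cast_sub (show 2 ≤ q by omega)]
    push_cast
    rw [div_eq_div_iff (by
      have : (3 : ℝ) ≤ (q : ℝ) := by exact_mod_cast hq
      intro h; linarith [h]) two_ne_zero]
    linear_combination hcR
  have h1 : rootedDensity (antiEdge q) R = ((q : ℝ) + 1) / 2 := by
    apply IsGreatest.csSup_eq
    constructor
    · refine ⟨⊤, by rw [hvtop]; exact hne0, ?_⟩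
      rw [hEtop, hvtop, hksub, hval]
    · rintro x ⟨H', hne, rfl⟩
      have hk : 0 < (H'.verts \ R).ncard := (Set.ncard_pos (Set.toFinite _)).2 hne
      have hnat : 2 * H'.edgeSet.ncard ≤ (H'.verts \ R).ncard * (q + 1) :=
        antiEdge_key q hq H'
      rw [div_le_div_iff₀ (by exact_mod_cast hk) two_pos]
      have hcast := (Nat.cast_le (α := ℝ)).2 hnat
      push_cast at hcast
      linarith
  have h2 : density2 (antiEdge q) ≤ ((q : ℝ) + 1) / 2 := by
    apply csSup_le
    · refine ⟨_, ⟨⊤, ?_, rfl⟩⟩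
      rw [SimpleGraph.Subgraph.verts_top, Set.ncard_univ, Nat.card_eq_fintype_card,
        Fintype.card_fin]
      omega
    · rintro x ⟨H', h3, rfl⟩
      have hnat : 2 * H'.edgeSet.ncard ≤ (H'.verts.ncard - 2) * (q + 1) + 2 :=
        antiEdge_key2 q hq H' h3
      have hpos : (0 : ℝ) < (H'.verts.ncard : ℝ) - 2 := by
        have : (3 : ℝ) ≤ (H'.verts.ncard : ℝ) := by exact_mod_cast h3
        linarith
      rw [div_le_div_iff₀ hpos two_pos]
      have hcast := (Nat.cast_le (α := ℝ)).2 hnat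
      push_cast [Nat.cast_sub (show 2 ≤ H'.verts.ncard by omega)] at hcast
      linarith
  exact ⟨h1, by rw [rootedDensity2, h1]; exact max_eq_left h2⟩
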